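/- For every nonzero v = (v₁, v₂, v₃) ∈ ℝ³, the entries of D(v) are differentiable functions of v, with gradients ∇_v D_{11}(v) = d_t (v₁, v₂, v₃)/|v| + (d_l − d_t)(v₁(v₁² + 2v₂² + 2v₃²), −v₁² v₂, −v₁² v₃)/|v|³; ∇_v D_{12}(v) = ∇_v D_{21}(v) = (d_l − d_t)(v₂(v₂² + v₃²), v₁(v₁² + v₃²), −v₁ v₂ v₃)/|v|³; ∇_v D_{13}(v) = ∇_v D_{31}(v) = (d_l − d_t)(v₃(v₂² + v₃²), −v₁ v₂ v₃, v₁(v₁² + v₂²))/|v|³; ∇_v D_{22}(v) = d_t (v₁, v₂, v₃)/|v| + (d_l − d_t)(−v₁ v₂², v₂(2v₁² + v₂² + 2v₃²), −v₂² v₃)/|v|³; ∇_v D_{23}(v) = ∇_v D_{32}(v) = (d_l − d_t)(−v₁ v₂ v₃, v₃(v₁² + v₃²), v₂(v₁² + v₂²))/|v|³; and ∇_v D_{33}(v) = d_t (v₁, v₂, v₃)/|v| + (d_l − d_t)(−v₁ v₃², −v₂ v₃², v₃(2v₁² + 2v₂² + v₃²))/|v|³. -/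

import Mathlib

open scoped BigOperators

/-- Euclidean norm of a vector in ℝ³. -/
noncomputable def norm3 (v : Fin 3 → ℝ) : ℝ := Real.sqrt (∑ i, v i ^ 2)

/-- The 3D Bear–Scheidegger diffusion–dispersion tensor. -/
noncomputable def bsD (φ dm dt dl : ℝ) (v : Fin 3 → ℝ) (i j : Fin 3) : ℝ :=
  (φ * dm + dt * norm3 v) * (if i = j then (1 : ℝ) else 0) + (dl - dt) * v i * v j / norm3 v

/-- The continuous linear map `u ↦ g · u` on ℝ³, i.e. the linear map whose
gradient vector is `g`. -/
noncomputable def clmOf (g : Fin 3 → ℝ) : (Fin 3 → ℝ) →L[ℝ] ℝ :=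
  ∑ k, g k • (ContinuousLinearMap.proj k : (Fin 3 → ℝ) →L[ℝ] ℝ)

lemma clmOf_apply (g : Fin 3 → ℝ) (u : Fin 3 → ℝ) : clmOf g u = ∑ k, g k * u k := by
  simp [clmOf, ContinuousLinearMap.sum_apply]

lemma sum_sq_pos {v : Fin 3 → ℝ} (hv : v ≠ 0) : 0 < ∑ k, v k ^ 2 := by
  obtain ⟨k, hk⟩ := Function.ne_iff.mp hv
  exact Finset.sum_pos' (fun i _ => sq_nonneg _)
    ⟨k, Finset.mem_univ k, lt_of_le_of_ne (sq_nonneg _) (Ne.symm (pow_ne_zero 2 hk))⟩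

lemma norm3_pos {v : Fin 3 → ℝ} (hv : v ≠ 0) : 0 < norm3 v :=
  Real.sqrt_pos.mpr (sum_sq_pos hv)

lemma norm3_sq (v : Fin 3 → ℝ) : norm3 v ^ 2 = ∑ k, v k ^ 2 :=
  Real.sq_sqrt (Finset.sum_nonneg fun i _ => sq_nonneg _)

lemma hasFDerivAt_norm3 {v : Fin 3 → ℝ} (hv : v ≠ 0) :
    HasFDerivAt norm3 (clmOf (fun k => v k / norm3 v)) v := by
  have hS : HasFDerivAt (fun u : Fin 3 → ℝ => ∑ k, u k ^ 2)
      (∑ k, ((2:ℕ) * v k ^ 1) • (ContinuousLinearMap.proj k : (Fin 3 → ℝ) →L[ℝ] ℝ)) v := by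
    apply HasFDerivAt.fun_sum
    intro k _
    exact (hasDerivAt_pow 2 (v k)).comp_hasFDerivAt v
      ((ContinuousLinearMap.proj k : (Fin 3 → ℝ) →L[ℝ] ℝ)).hasFDerivAt
  have hs := sum_sq_pos hv
  have h := (Real.hasDerivAt_sqrt hs.ne').comp_hasFDerivAt v hS
  refine h.congr_fderiv ?_
  symm
  rw [clmOf, Finset.smul_sum]
  refine Finset.sum_congr rfl fun k _ => ?_
  rw [smul_smul]
  congr 1
  have hn : Real.sqrt (∑ k, v k ^ 2) ≠ 0 := (norm3_pos hv).ne'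
  simp only [norm3]
  field_simp
  ring


set_option maxHeartbeats 2000000 in
lemma hasFDerivAt_bsD (φ dm dt dl : ℝ) {v : Fin 3 → ℝ} (hv : v ≠ 0) (i j : Fin 3) :
    HasFDerivAt (fun u => bsD φ dm dt dl u i j)
      (clmOf (fun k => dt * (if i = j then (1:ℝ) else 0) * v k / norm3 v
        + (dl - dt) * ((if k = i then v j else 0) + (if k = j then v i else 0)) / norm3 v
        - (dl - dt) * v i * v j * v k / norm3 v ^ 3)) v := by
  have hn := norm3_pos hv
  have hN := hasFDerivAt_norm3 hv
  have h1 := ((hasFDerivAt_const (φ * dm) v).add (hN.const_mul dt)).mul_const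
    (if i = j then (1:ℝ) else 0)
  have hinv := (hasDerivAt_inv hn.ne').comp_hasFDerivAt v hN
  have hij := (((ContinuousLinearMap.proj i : (Fin 3 → ℝ) →L[ℝ] ℝ)).hasFDerivAt (x := v) |>.mul
    (((ContinuousLinearMap.proj j : (Fin 3 → ℝ) →L[ℝ] ℝ)).hasFDerivAt (x := v))).const_mul (dl - dt)
  have h2 := hij.mul hinv
  have h := h1.add h2
  have hfun : (fun u => bsD φ dm dt dl u i j) =
      (fun u => (φ * dm + dt * norm3 u) * (if i = j then (1:ℝ) else 0)
        + ((dl - dt) * ((ContinuousLinearMap.proj i : (Fin 3 → ℝ) →L[ℝ] ℝ) u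
            * (ContinuousLinearMap.proj j : (Fin 3 → ℝ) →L[ℝ] ℝ) u)) * ((fun x => x⁻¹) ∘ norm3) u) := by
    funext u
    simp [bsD, div_eq_mul_inv, mul_assoc, Function.comp]
  rw [hfun]
  refine h.congr_fderiv ?_
  refine ContinuousLinearMap.ext fun w => ?_
  simp only [clmOf_apply, ContinuousLinearMap.add_apply, ContinuousLinearMap.smul_apply,
    ContinuousLinearMap.zero_apply, ContinuousLinearMap.proj_apply, smul_eq_mul,
    Fin.sum_univ_three, Function.comp_apply, Pi.mul_apply]
  have h3 : norm3 v ^ 3 = norm3 v * norm3 v ^ 2 := by ring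
  fin_cases i <;> fin_cases j <;>
    simp only [Fin.isValue, Fin.zero_eta, Fin.mk_one, Fin.reduceFinMk, Fin.reduceEq,
      if_true, if_false, ite_true, ite_false, Fin.sum_univ_three] <;>
    field_simp <;> ring


set_option maxHeartbeats 2000000 in
theorem stmt11 (φ dm dt dl : ℝ) (hφ : 0 < φ) (hdm : 0 < dm) (hdt : 0 < dt) (hdl : 0 < dl)
    (v : Fin 3 → ℝ) (hv : v ≠ 0) :
    HasFDerivAt (fun u => bsD φ dm dt dl u 0 0)
      (clmOf (fun k => dt * v k / norm3 v +
        (dl - dt) * ![v 0 * (v 0 ^ 2 + 2 * v 1 ^ 2 + 2 * v 2 ^ 2),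
          -(v 0 ^ 2 * v 1), -(v 0 ^ 2 * v 2)] k / norm3 v ^ 3)) v ∧
    HasFDerivAt (fun u => bsD φ dm dt dl u 0 1)
      (clmOf (fun k => (dl - dt) * ![v 1 * (v 1 ^ 2 + v 2 ^ 2),
        v 0 * (v 0 ^ 2 + v 2 ^ 2), -(v 0 * v 1 * v 2)] k / norm3 v ^ 3)) v ∧
    HasFDerivAt (fun u => bsD φ dm dt dl u 1 0)
      (clmOf (fun k => (dl - dt) * ![v 1 * (v 1 ^ 2 + v 2 ^ 2),
        v 0 * (v 0 ^ 2 + v 2 ^ 2), -(v 0 * v 1 * v 2)] k / norm3 v ^ 3)) v ∧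
    HasFDerivAt (fun u => bsD φ dm dt dl u 0 2)
      (clmOf (fun k => (dl - dt) * ![v 2 * (v 1 ^ 2 + v 2 ^ 2),
        -(v 0 * v 1 * v 2), v 0 * (v 0 ^ 2 + v 1 ^ 2)] k / norm3 v ^ 3)) v ∧
    HasFDerivAt (fun u => bsD φ dm dt dl u 2 0)
      (clmOf (fun k => (dl - dt) * ![v 2 * (v 1 ^ 2 + v 2 ^ 2),
        -(v 0 * v 1 * v 2), v 0 * (v 0 ^ 2 + v 1 ^ 2)] k / norm3 v ^ 3)) v ∧
    HasFDerivAt (fun u => bsD φ dm dt dl u 1 1)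
      (clmOf (fun k => dt * v k / norm3 v +
        (dl - dt) * ![-(v 0 * v 1 ^ 2),
          v 1 * (2 * v 0 ^ 2 + v 1 ^ 2 + 2 * v 2 ^ 2), -(v 1 ^ 2 * v 2)] k / norm3 v ^ 3)) v ∧
    HasFDerivAt (fun u => bsD φ dm dt dl u 1 2)
      (clmOf (fun k => (dl - dt) * ![-(v 0 * v 1 * v 2),
        v 2 * (v 0 ^ 2 + v 2 ^ 2), v 1 * (v 0 ^ 2 + v 1 ^ 2)] k / norm3 v ^ 3)) v ∧
    HasFDerivAt (fun u => bsD φ dm dt dl u 2 1)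
      (clmOf (fun k => (dl - dt) * ![-(v 0 * v 1 * v 2),
        v 2 * (v 0 ^ 2 + v 2 ^ 2), v 1 * (v 0 ^ 2 + v 1 ^ 2)] k / norm3 v ^ 3)) v ∧
    HasFDerivAt (fun u => bsD φ dm dt dl u 2 2)
      (clmOf (fun k => dt * v k / norm3 v +
        (dl - dt) * ![-(v 0 * v 2 ^ 2), -(v 1 * v 2 ^ 2),
          v 2 * (2 * v 0 ^ 2 + 2 * v 1 ^ 2 + v 2 ^ 2)] k / norm3 v ^ 3)) v := by
  have hs : norm3 v ^ 2 = v 0 ^ 2 + v 1 ^ 2 + v 2 ^ 2 := by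
    rw [norm3_sq, Fin.sum_univ_three]
  have hn0 : norm3 v ≠ 0 := (norm3_pos hv).ne'
  have hsum0 : v 0 ^ 2 + v 1 ^ 2 + v 2 ^ 2 ≠ 0 := by rw [← hs]; positivity
  have hcube : norm3 v ^ 3 = (v 0 ^ 2 + v 1 ^ 2 + v 2 ^ 2) * norm3 v := by
    rw [pow_succ, hs]
  have main := hasFDerivAt_bsD φ dm dt dl hv
  refine ⟨?_, ?_, ?_, ?_, ?_, ?_, ?_, ?_, ?_⟩
  case _ => convert main 0 0 using 2; funext k
            fin_cases k <;> simp <;> rw [hcube] <;> field_simp <;> ring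
  case _ => convert main 0 1 using 2; funext k
            fin_cases k <;> simp <;> rw [hcube] <;> field_simp <;> ring
  case _ => convert main 1 0 using 2; funext k
            fin_cases k <;> simp <;> rw [hcube] <;> field_simp <;> ring
  case _ => convert main 0 2 using 2; funext k
            fin_cases k <;> simp <;> rw [hcube] <;> field_simp <;> ring
  case _ => convert main 2 0 using 2; funext k
            fin_cases k <;> simp <;> rw [hcube] <;> field_simp <;> ring
  case _ => convert main 1 1 using 2; funext k
            fin_cases k <;> simp <;> rw [hcube] <;> field_simp <;> ring
  case _ => convert main 1 2 using 2; funext k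
            fin_cases k <;> simp <;> rw [hcube] <;> field_simp <;> ring
  case _ => convert main 2 1 using 2; funext k
            fin_cases k <;> simp <;> rw [hcube] <;> field_simp <;> ring
  case _ => convert main 2 2 using 2; funext k
            fin_cases k <;> simp <;> rw [hcube] <;> field_simp <;> ring
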